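/- Let N ≥ 1, let 0 ≤ d ≤ π, and let h be an N×N complex unitary matrix all of whose eigenvalues are of the form e^{iα} with α ∈ [−d, d]. Then for every unit vector v ∈ ℂ^N, the real part of the Hermitian inner product ⟨h v, v⟩ is at least cos d. -/

import Mathlib

open Matrix Polynomial
open scoped ComplexOrder

/-- The displacement estimate from the paper's Lemma `eigeninterval`: if all eigenvalues of
the unitary matrix `h` are of the form `e^{iα}` with `α ∈ [-d, d]` and `0 ≤ d ≤ π`, then
`Re ⟨h v, v⟩ ≥ cos d` for every unit vector `v ∈ ℂᴺ`. -/
theorem stmt3 (N : ℕ) (hN : 1 ≤ N) (d : ℝ) (hd0 : 0 ≤ d) (hdπ : d ≤ Real.pi)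
    (h : Matrix (Fin N) (Fin N) ℂ)
    (hu : h ∈ unitary (Matrix (Fin N) (Fin N) ℂ))
    (hspec : ∀ c ∈ spectrum ℂ h, ∃ α : ℝ, -d ≤ α ∧ α ≤ d ∧ c = Complex.exp (α * Complex.I)) :
    ∀ v : EuclideanSpace ℂ (Fin N), ‖v‖ = 1 →
      Real.cos d ≤ (inner (𝕜 := ℂ) (Matrix.toEuclideanLin h v) v).re := by
  intro v hv
  haveI : NeZero N := ⟨by omega⟩
  obtain ⟨hu1, hu2⟩ := (Unitary.mem_iff).mp hu
  -- charpoly data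
  set χ : ℂ[X] := h.charpoly with hχ
  set c0 : ℂ := χ.coeff 0 with hc0def
  have hdet : h.det = (-1) ^ N * c0 := by
    simpa using h.det_eq_sign_charpoly_coeff
  have hdet_ne : h.det ≠ 0 := by
    have : IsUnit h := ⟨Unitary.toUnits ⟨h, hu1, hu2⟩, rfl⟩
    exact (isUnit_iff_isUnit_det h).mp this |>.ne_zero
  have hc0 : c0 ≠ 0 := by
    intro h0
    apply hdet_ne
    rw [hdet, h0, mul_zero]
  -- Cayley-Hamilton: h * q = -(c0 • 1), where q = aeval h χ.divX
  have hCH : aeval h χ = 0 := h.aeval_self_charpoly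
  have hsplit : X * χ.divX + C c0 = χ := X_mul_divX_add χ
  have hq : h * aeval h χ.divX + c0 • (1 : Matrix (Fin N) (Fin N) ℂ) = 0 := by
    have := congrArg (aeval h) hsplit
    rw [hCH] at this
    simpa [Algebra.algebraMap_eq_smul_one] using this
  -- star h is a polynomial in h
  have hstar_eq : star h = (-c0)⁻¹ • aeval h χ.divX := by
    have h1 : h * aeval h χ.divX = (-c0) • (1 : Matrix (Fin N) (Fin N) ℂ) := by
      rw [neg_smul]; exact eq_neg_of_add_eq_zero_left hq
    have h2 : star h * (h * aeval h χ.divX) = aeval h χ.divX := by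
      rw [← mul_assoc, hu1, one_mul]
    rw [h1] at h2
    rw [← h2, mul_smul_comm, mul_one, smul_smul, inv_mul_cancel₀ (neg_ne_zero.mpr hc0),
      one_smul]
  -- the key Hermitian matrix
  set cd : ℝ := 2 * Real.cos d with hcd
  set K : Matrix (Fin N) (Fin N) ℂ :=
    h + star h - ((cd : ℂ)) • 1 with hK
  have hKherm : K.IsHermitian := by
    have : star K = K := by
      simp only [hK, star_sub, star_add, star_star, star_smul, star_one]
      rw [add_comm (star h) h]
      congr 1
      simp [Complex.star_def, Complex.conj_ofReal]
    simpa [Matrix.IsHermitian, Matrix.star_eq_conjTranspose] using this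
  -- K as a polynomial in h
  set P : ℂ[X] := X + C ((-c0)⁻¹) * χ.divX - C ((cd : ℂ)) with hP
  have hKP : aeval h P = K := by
    simp only [hP, map_sub, map_add, _root_.map_mul, aeval_X, aeval_C, hK,
      Algebra.algebraMap_eq_smul_one, hstar_eq]
    rw [Algebra.smul_def, Algebra.algebraMap_eq_smul_one, smul_mul_assoc, one_mul]
    rw [smul_mul_assoc, one_mul]
  -- spectrum facts
  have hnon : (spectrum ℂ h).Nonempty :=
    spectrum.nonempty_of_isAlgClosed_of_finiteDimensional ℂ h
  have hmapχ : spectrum ℂ (aeval h χ) = (fun k => eval k χ) '' spectrum ℂ h :=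
    spectrum.map_polynomial_aeval_of_nonempty h χ hnon
  have hmapP : spectrum ℂ K = (fun k => eval k P) '' spectrum ℂ h := by
    rw [← hKP]
    exact spectrum.map_polynomial_aeval_of_nonempty h P hnon
  -- roots of charpoly on spectrum
  have hroot : ∀ z ∈ spectrum ℂ h, eval z χ = 0 := by
    intro z hz
    have : eval z χ ∈ spectrum ℂ (aeval h χ) := by
      rw [hmapχ]; exact ⟨z, hz, rfl⟩
    rw [hCH, spectrum.zero_eq] at this
    simpa using this
  -- evaluate P on the spectrum
  have hPval : ∀ z ∈ spectrum ℂ h, ∃ α : ℝ, -d ≤ α ∧ α ≤ d ∧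
      eval z P = ((2 * Real.cos α - cd : ℝ) : ℂ) := by
    intro z hz
    obtain ⟨α, hα1, hα2, hzeq⟩ := hspec z hz
    refine ⟨α, hα1, hα2, ?_⟩
    have hzne : z ≠ 0 := by rw [hzeq]; exact Complex.exp_ne_zero _
    have hevalχ : z * eval z χ.divX + c0 = 0 := by
      have := congrArg (eval z) hsplit
      rw [hroot z hz] at this
      simpa using this
    have hdivXval : (-c0)⁻¹ * eval z χ.divX = z⁻¹ := by
      have h1 : z * eval z χ.divX = -c0 := by linear_combination hevalχ
      have hz' : eval z χ.divX = -c0 * z⁻¹ := by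
        have h2 : eval z χ.divX = z⁻¹ * (z * eval z χ.divX) := by
          rw [← mul_assoc, inv_mul_cancel₀ hzne, one_mul]
        rw [h2, h1, mul_comm]
      rw [hz', ← mul_assoc, inv_mul_cancel₀ (neg_ne_zero.mpr hc0), one_mul]
    have hzinv : z⁻¹ = Complex.exp (-α * Complex.I) := by
      rw [hzeq, ← Complex.exp_neg]; ring_nf
    have hsum : z + z⁻¹ = ((2 * Real.cos α : ℝ) : ℂ) := by
      rw [hzeq, ← Complex.exp_neg,
        show (-(↑α * Complex.I) : ℂ) = ((-α : ℝ) : ℂ) * Complex.I by push_cast; ring]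
      rw [Complex.exp_mul_I, Complex.exp_mul_I, ← Complex.ofReal_cos, ← Complex.ofReal_sin,
        ← Complex.ofReal_cos, ← Complex.ofReal_sin, Real.cos_neg, Real.sin_neg]
      push_cast
      ring
    simp only [hP, eval_sub, eval_add, eval_mul, eval_X, eval_C, hdivXval]
    rw [hsum]
    push_cast
    ring
  -- eigenvalues of K are nonneg
  have heig : ∀ i, 0 ≤ hKherm.eigenvalues i := by
    intro i
    have hmem : ((hKherm.eigenvalues i : ℂ)) ∈ spectrum ℂ K := by
      have := hKherm.eigenvalues_mem_spectrum_real i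
      exact spectrum.algebraMap_mem ℂ this
    rw [hmapP] at hmem
    obtain ⟨z, hz, hze⟩ := hmem
    obtain ⟨α, hα1, hα2, hPz⟩ := hPval z hz
    replace hze : eval z P = ((hKherm.eigenvalues i : ℝ) : ℂ) := hze
    rw [hPz] at hze
    have : (2 * Real.cos α - cd : ℝ) = hKherm.eigenvalues i := by
      exact_mod_cast hze
    rw [← this, hcd]
    have hcos : Real.cos d ≤ Real.cos α := by
      rw [← Real.cos_abs α]
      exact Real.cos_le_cos_of_nonneg_of_le_pi (abs_nonneg α) hdπ
        (abs_le.mpr ⟨hα1, hα2⟩)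
    linarith
  have hPSD : K.PosSemidef := hKherm.posSemidef_iff_eigenvalues_nonneg.mpr heig
  -- unfold the quadratic form
  set x : Fin N → ℂ := (WithLp.equiv 2 (Fin N → ℂ)) v with hx
  have hquad := hPSD.dotProduct_mulVec_nonneg x
  have hxx : star x ⬝ᵥ x = 1 := by
    have h1 : (inner (𝕜 := ℂ) v v) = star x ⬝ᵥ x :=
      (EuclideanSpace.inner_eq_star_dotProduct v v).trans (dotProduct_comm _ _)
    rw [← h1, inner_self_eq_norm_sq_to_K, hv]
    norm_num
  set t : ℂ := star x ⬝ᵥ (h *ᵥ x) with ht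
  have hstar_t : star x ⬝ᵥ (star h *ᵥ x) = star (h *ᵥ x) ⬝ᵥ x := by
    rw [Matrix.dotProduct_mulVec, Matrix.star_eq_conjTranspose, ← Matrix.star_mulVec]
  have hconj : star (h *ᵥ x) ⬝ᵥ x = (starRingEnd ℂ) t := by
    rw [ht]
    simp only [dotProduct, Pi.star_apply, map_sum, _root_.map_mul, RingHom.comp_apply]
    congr 1
    ext i
    simp [mul_comm, Complex.star_def]
  have hKx : star x ⬝ᵥ (K *ᵥ x) = t + (starRingEnd ℂ) t - (cd : ℂ) := by
    rw [hK]
    rw [Matrix.sub_mulVec, Matrix.add_mulVec, Matrix.smul_mulVec, Matrix.one_mulVec]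
    rw [dotProduct_sub, dotProduct_add, dotProduct_smul]
    rw [hstar_t, hconj, smul_eq_mul, hxx, mul_one]
  rw [hKx] at hquad
  have hre : 0 ≤ (t + (starRingEnd ℂ) t - (cd : ℂ)).re := by
    rw [Complex.le_def] at hquad
    simpa using hquad.1
  have htre : (t + (starRingEnd ℂ) t - (cd : ℂ)).re = 2 * t.re - cd := by
    simp [Complex.add_re, Complex.sub_re, Complex.conj_re]
    ring
  -- relate to the inner product in the goal
  have hgoal : (inner (𝕜 := ℂ) (Matrix.toEuclideanLin h v) v) = star (h *ᵥ x) ⬝ᵥ x := by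
    rw [EuclideanSpace.inner_eq_star_dotProduct, dotProduct_comm]
    congr 1
  rw [hgoal, hconj]
  rw [htre] at hre
  rw [hcd] at hre
  simp only [Complex.conj_re]
  linarith
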